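/- Let C₂ ⊆ C₁ ⊆ 𝔽₂ⁿ be binary codes with C₂ ≠ {0}. Then (C₁, C₂) is a maximal element of the poset 𝒫 of CSS-T pairs (i.e., (C₁, C₂) is a CSS-T pair and every CSS-T pair (D₁, D₂) with D₂ ≠ {0}, C₁ ⊆ D₁ and C₂ ⊆ D₂ satisfies D₁ = C₁ and D₂ = C₂) if and only if C₁^⊥ = C₁⋆C₂ and C₂^⊥ = C₁^{⋆2}. -/

import Mathlib

open Finset

/-- The Euclidean dual of a binary code. -/
def dualCode {n : ℕ} (C : Submodule (ZMod 2) (Fin n → ZMod 2)) :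
    Submodule (ZMod 2) (Fin n → ZMod 2) where
  carrier := {x | ∀ c ∈ C, ∑ i, x i * c i = 0}
  add_mem' := by
    intro a b ha hb
    intro c hc
    have : ∑ i, (a + b) i * c i = ∑ i, (a i * c i + b i * c i) := by
      apply Finset.sum_congr rfl
      intro i _
      simp [add_mul]
    rw [this, Finset.sum_add_distrib, ha c hc, hb c hc, add_zero]
  zero_mem' := by
    intro c hc
    simp
  smul_mem' := by
    intro r a ha
    intro c hc
    have : ∑ i, (r • a) i * c i = r * ∑ i, a i * c i := by
      rw [Finset.mul_sum]
      apply Finset.sum_congr rfl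
      intro i _
      simp [mul_assoc]
    rw [this, ha c hc, mul_zero]

/-- The (componentwise) Schur product of two binary codes. -/
def schur {n : ℕ} (C D : Submodule (ZMod 2) (Fin n → ZMod 2)) :
    Submodule (ZMod 2) (Fin n → ZMod 2) :=
  Submodule.span (ZMod 2) {x | ∃ c ∈ C, ∃ d ∈ D, x = c * d}

/-- A pair of binary codes `(C₁, C₂)` is a CSS-T pair if `C₂ ⊆ C₁ ∩ (C₁^{⋆2})^⊥`. -/
def IsCSST {n : ℕ} (C₁ C₂ : Submodule (ZMod 2) (Fin n → ZMod 2)) : Prop :=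
  C₂ ≤ C₁ ⊓ dualCode (schur C₁ C₁)

/- ### Auxiliary material -/

/-- The standard dot-product bilinear form on `Fin n → ZMod 2`. -/
def dotB (n : ℕ) : LinearMap.BilinForm (ZMod 2) (Fin n → ZMod 2) :=
  LinearMap.mk₂ (ZMod 2) (fun x y => ∑ i, x i * y i)
    (by intro x x' y; simp [add_mul, Finset.sum_add_distrib])
    (by intro r x y; simp [Finset.mul_sum, mul_assoc])
    (by intro x y y'; simp [mul_add, Finset.sum_add_distrib])
    (by intro r x y; simp [Finset.mul_sum, mul_assoc, mul_left_comm])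

lemma dotB_apply {n : ℕ} (x y : Fin n → ZMod 2) : dotB n x y = ∑ i, x i * y i := rfl

lemma dotB_nondeg (n : ℕ) : (dotB n).Nondegenerate := by
  constructor <;> intro x hx <;> funext i <;> have := hx (Pi.single i 1) <;>
  simpa [dotB_apply, Pi.single_apply, Finset.sum_ite_eq', Finset.sum_ite_eq] using this

lemma dotB_refl (n : ℕ) : (dotB n).IsRefl := by
  intro x y h
  rw [dotB_apply] at h ⊢
  rw [← h]
  exact Finset.sum_congr rfl (fun i _ => mul_comm _ _)

lemma mem_dualCode {n : ℕ} {C : Submodule (ZMod 2) (Fin n → ZMod 2)}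
    {x : Fin n → ZMod 2} :
    x ∈ dualCode C ↔ ∀ c ∈ C, ∑ i, x i * c i = 0 := Iff.rfl

lemma dualCode_eq_orth {n : ℕ} (C : Submodule (ZMod 2) (Fin n → ZMod 2)) :
    dualCode C = (dotB n).orthogonal C := by
  ext x
  rw [mem_dualCode, LinearMap.BilinForm.mem_orthogonal_iff]
  constructor
  · intro h c hc
    show dotB n c x = 0
    rw [dotB_apply, ← h c hc]
    exact Finset.sum_congr rfl (fun i _ => mul_comm _ _)
  · intro h c hc
    have := h c hc
    rw [dotB_apply] at this
    rw [← this]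
    exact Finset.sum_congr rfl (fun i _ => mul_comm _ _)

lemma dual_dual {n : ℕ} (C : Submodule (ZMod 2) (Fin n → ZMod 2)) :
    dualCode (dualCode C) = C := by
  rw [dualCode_eq_orth, dualCode_eq_orth,
    LinearMap.BilinForm.orthogonal_orthogonal (dotB_nondeg n) (dotB_refl n)]

lemma dual_anti {n : ℕ} {C D : Submodule (ZMod 2) (Fin n → ZMod 2)} (h : C ≤ D) :
    dualCode D ≤ dualCode C := fun x hx c hc => hx c (h hc)

lemma mul_mem_schur {n : ℕ} {C D : Submodule (ZMod 2) (Fin n → ZMod 2)}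
    {c d : Fin n → ZMod 2} (hc : c ∈ C) (hd : d ∈ D) : c * d ∈ schur C D :=
  Submodule.subset_span ⟨c, hc, d, hd, rfl⟩

lemma schur_mono {n : ℕ} {C C' D D' : Submodule (ZMod 2) (Fin n → ZMod 2)}
    (h1 : C ≤ C') (h2 : D ≤ D') : schur C D ≤ schur C' D' :=
  Submodule.span_mono (by rintro x ⟨c, hc, d, hd, rfl⟩; exact ⟨c, h1 hc, d, h2 hd, rfl⟩)

lemma dual_schur_apply {n : ℕ} {C D : Submodule (ZMod 2) (Fin n → ZMod 2)}
    {x c d : Fin n → ZMod 2} (hx : x ∈ dualCode (schur C D))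
    (hc : c ∈ C) (hd : d ∈ D) : ∑ i, x i * (c i * d i) = 0 := by
  have := hx (c * d) (mul_mem_schur hc hd)
  simpa [Pi.mul_apply] using this

lemma mem_dual_schur {n : ℕ} {C D : Submodule (ZMod 2) (Fin n → ZMod 2)}
    {x : Fin n → ZMod 2}
    (h : ∀ c ∈ C, ∀ d ∈ D, ∑ i, x i * (c i * d i) = 0) :
    x ∈ dualCode (schur C D) := by
  intro w hw
  induction hw using Submodule.span_induction with
  | mem w hw =>
    obtain ⟨c, hc, d, hd, rfl⟩ := hw
    simpa [Pi.mul_apply, mul_assoc] using h c hc d hd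
  | zero => simp
  | add a b _ _ ha hb =>
    have : ∑ i, x i * (a + b) i = (∑ i, x i * a i) + ∑ i, x i * b i := by
      rw [← Finset.sum_add_distrib]
      exact Finset.sum_congr rfl (fun i _ => by simp [mul_add])
    rw [this, ha, hb, add_zero]
  | smul r a _ ha =>
    have : ∑ i, x i * (r • a) i = r * ∑ i, x i * a i := by
      rw [Finset.mul_sum]
      exact Finset.sum_congr rfl (fun i _ => by simp; ring)
    rw [this, ha, mul_zero]

theorem stmt_11 (n : ℕ) (C₁ C₂ : Submodule (ZMod 2) (Fin n → ZMod 2))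
    (hsub : C₂ ≤ C₁) (h₂ : C₂ ≠ ⊥) :
    (IsCSST C₁ C₂ ∧
      ∀ D₁ D₂ : Submodule (ZMod 2) (Fin n → ZMod 2),
        IsCSST D₁ D₂ → D₂ ≠ ⊥ → C₁ ≤ D₁ → C₂ ≤ D₂ → D₁ = C₁ ∧ D₂ = C₂)
    ↔ (dualCode C₁ = schur C₁ C₂ ∧ dualCode C₂ = schur C₁ C₁) := by
  constructor
  · rintro ⟨hcsst, hmax⟩
    obtain ⟨h21, horth⟩ := le_inf_iff.mp hcsst
    have T : ∀ a ∈ C₂, ∀ c ∈ C₁, ∀ d ∈ C₁, ∑ i, a i * (c i * d i) = 0 :=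
      fun a ha c hc d hd => dual_schur_apply (horth ha) hc hd
    -- Step A: `dualCode (schur C₁ C₂) ≤ C₁`.
    have hE : dualCode (schur C₁ C₂) ≤ C₁ := by
      intro x hx
      have hx' : ∀ c ∈ C₁, ∀ d ∈ C₂, ∑ i, x i * (c i * d i) = 0 :=
        fun c hc d hd => dual_schur_apply hx hc hd
      have hcss : IsCSST (C₁ ⊔ Submodule.span (ZMod 2) {x}) C₂ := by
        refine le_inf (hsub.trans le_sup_left) ?_
        intro a ha
        apply mem_dual_schur
        intro c hc d hd
        obtain ⟨c₁, hc₁, y, hy, rfl⟩ := Submodule.mem_sup.mp hc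
        obtain ⟨ε, rfl⟩ := Submodule.mem_span_singleton.mp hy
        obtain ⟨d₁, hd₁, z, hz, rfl⟩ := Submodule.mem_sup.mp hd
        obtain ⟨δ, rfl⟩ := Submodule.mem_span_singleton.mp hz
        have key : ∀ p q r s e f : ZMod 2,
            p * ((q + e * s) * (r + f * s)) =
              p * (q * r) + (e * (s * (r * p)) +
                (f * (s * (q * p)) + (e * f) * (s * (p * p)))) := by decide
        have expand : ∑ i, a i * ((c₁ + ε • x) i * (d₁ + δ • x) i) =
            (∑ i, a i * (c₁ i * d₁ i)) + (ε * (∑ i, x i * (d₁ i * a i)) +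
              (δ * (∑ i, x i * (c₁ i * a i)) +
                (ε * δ) * (∑ i, x i * (a i * a i)))) := by
          simp only [Finset.mul_sum, ← Finset.sum_add_distrib]
          refine Finset.sum_congr rfl (fun i _ => ?_)
          simp only [Pi.add_apply, Pi.smul_apply, smul_eq_mul]
          exact key (a i) (c₁ i) (d₁ i) (x i) ε δ
        rw [expand, T a ha c₁ hc₁ d₁ hd₁, hx' d₁ hd₁ a ha, hx' c₁ hc₁ a ha,
          hx' a (hsub ha) a ha]
        simp
      have heq := (hmax _ C₂ hcss h₂ le_sup_left le_rfl).1
      have hxin : x ∈ C₁ ⊔ Submodule.span (ZMod 2) {x} :=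
        Submodule.mem_sup_right (Submodule.mem_span_singleton_self x)
      rwa [heq] at hxin
    -- Step B: `C₁ ≤ dualCode (schur C₁ C₂)`.
    have hE' : C₁ ≤ dualCode (schur C₁ C₂) := by
      intro c hc
      apply mem_dual_schur
      intro c' hc' a ha
      rw [← T a ha c hc c' hc']
      exact Finset.sum_congr rfl (fun i _ => by ring)
    have hEeq : dualCode (schur C₁ C₂) = C₁ := le_antisymm hE hE'
    constructor
    · conv_lhs => rw [← hEeq]
      exact dual_dual _
    · have hF1 : dualCode (schur C₁ C₁) ≤ C₁ :=
        (dual_anti (schur_mono le_rfl hsub)).trans hE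
      have hcss2 : IsCSST C₁ (dualCode (schur C₁ C₁)) := le_inf hF1 le_rfl
      have hFne : dualCode (schur C₁ C₁) ≠ ⊥ := by
        intro h
        exact h₂ (le_bot_iff.mp (h ▸ horth))
      have heq := (hmax C₁ _ hcss2 hFne le_rfl horth).2
      rw [← heq, dual_dual]
  · rintro ⟨hd1, hd2⟩
    constructor
    · refine le_inf hsub ?_
      rw [← hd2, dual_dual]
    · intro D₁ D₂ hD hne h1 h2
      obtain ⟨hD21, hDorth⟩ := le_inf_iff.mp hD
      have hs1 : schur D₁ D₂ ≤ dualCode D₁ := by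
        apply Submodule.span_le.mpr
        rintro x ⟨c, hc, d, hd, rfl⟩
        intro e he
        rw [← dual_schur_apply (hDorth hd) hc he]
        exact Finset.sum_congr rfl (fun i _ => by rw [Pi.mul_apply]; ring)
      have hs2 : schur D₁ D₁ ≤ dualCode D₂ := by
        apply Submodule.span_le.mpr
        rintro x ⟨c, hc, d, hd, rfl⟩
        intro e he
        rw [← dual_schur_apply (hDorth he) hc hd]
        exact Finset.sum_congr rfl (fun i _ => by rw [Pi.mul_apply]; ring)
      have e1 : dualCode D₁ = dualCode C₁ :=
        le_antisymm (dual_anti h1) (by rw [hd1]; exact (schur_mono h1 h2).trans hs1)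
      have e2 : dualCode D₂ = dualCode C₂ :=
        le_antisymm (dual_anti h2) (by rw [hd2]; exact (schur_mono h1 h1).trans hs2)
      constructor
      · have := congrArg dualCode e1
        rwa [dual_dual, dual_dual] at this
      · have := congrArg dualCode e2
        rwa [dual_dual, dual_dual] at this
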